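/- arXiv:2510.20717 — 2 statements merged into one kernel-verified Lean document; each statement's English description precedes it below -/
import Mathlib

section
/- Let π₀ = δ₀ (point mass at 0) and let π₁ be a symmetric probability measure on [−δ, δ]. For σ > 0 let P_π denote the Gaussian mixture with density x ↦ ∫ φ_σ(x − v) dπ(v), φ_σ the N(0,σ²) density. Then the chi-squared divergence satisfies χ²(P_{π₁}, P_{δ₀}) ≤ cosh(δ²/σ²) − 1 ≤ exp((δ/σ)⁴/2) − 1. -/
open MeasureTheory ProbabilityTheory

lemma exp_h1 (K A B C : ℝ) (h : A = B + C) : K * Real.exp A = K * Real.exp B * Real.exp C := by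
  rw [mul_assoc (a := K), ← Real.exp_add, h]

lemma exp_h2' (K A B C D E : ℝ) (h : A + (B + C) = D + E) :
    (K * Real.exp A) * (Real.exp B * Real.exp C) = Real.exp D * (K * Real.exp E) := by
  rw [← Real.exp_add B C, mul_assoc (a := K), ← Real.exp_add, h, Real.exp_add]; ring

noncomputable def auxE (σ v x : ℝ) : ℝ := Real.exp ((2*v*x - v^2)/(2*σ^2))
noncomputable def auxA (σ v x : ℝ) : ENNReal := ENNReal.ofReal (auxE σ v x)
noncomputable def auxF (σ : ℝ) (π₁ : Measure ℝ) (x : ℝ) : ENNReal := ∫⁻ v, auxA σ v x ∂π₁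
noncomputable def auxL (σ : ℝ) (π₁ : Measure ℝ) : ENNReal :=
  ∫⁻ u, ∫⁻ v, ENNReal.ofReal (Real.exp (u*v/σ^2)) ∂π₁ ∂π₁

lemma auxE_nonneg (σ v x : ℝ) : 0 ≤ auxE σ v x := (Real.exp_pos _).le

lemma auxA_meas1 (σ x : ℝ) : Measurable (fun v => auxA σ v x) := by
  apply Measurable.ennreal_ofReal
  apply Continuous.measurable
  exact (Continuous.div_const (by fun_prop) _).rexp

lemma auxF_meas (σ : ℝ) (π₁ : Measure ℝ) [SFinite π₁] : Measurable (auxF σ π₁) :=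
  Measurable.lintegral_prod_right (f := fun x v => auxA σ v x) (by
    apply Measurable.ennreal_ofReal
    apply Continuous.measurable
    exact (Continuous.div_const (by fun_prop) _).rexp)

lemma expA_meas (σ : ℝ) :
    Measurable (fun q : ℝ × ℝ => ENNReal.ofReal (Real.exp (q.1*q.2/σ^2))) := by
  apply Measurable.ennreal_ofReal
  apply Continuous.measurable
  exact (Continuous.div_const (by fun_prop) _).rexp

lemma expA_meas1 (σ u : ℝ) :
    Measurable (fun v : ℝ => ENNReal.ofReal (Real.exp (u*v/σ^2))) := by
  apply Measurable.ennreal_ofReal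
  apply Continuous.measurable
  exact (Continuous.div_const (by fun_prop) _).rexp

lemma pdf_prod_meas (t : NNReal) : Measurable (fun q : ℝ × ℝ => gaussianPDF q.1 t q.2) := by
  simp only [gaussianPDF, gaussianPDFReal]
  apply Measurable.ennreal_ofReal
  apply Continuous.measurable
  exact Continuous.mul continuous_const (Continuous.rexp (by fun_prop))

lemma pdf_prod_meas' (t : NNReal) : Measurable (fun q : ℝ × ℝ => gaussianPDF q.2 t q.1) := by
  simp only [gaussianPDF, gaussianPDFReal]
  apply Measurable.ennreal_ofReal
  apply Continuous.measurable
  exact Continuous.mul continuous_const (Continuous.rexp (by fun_prop))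

section Main

variable {σ δ : ℝ} {t : NNReal} {π₁ : Measure ℝ} [IsProbabilityMeasure π₁]

lemma t_ne_zero (hσ : 0 < σ) (htc : (t : ℝ) = σ^2) : t ≠ 0 := by
  intro h
  rw [h] at htc
  simp only [NNReal.coe_zero] at htc
  nlinarith

lemma pdf_factor (hσ : 0 < σ) (htc : (t : ℝ) = σ^2) (v x : ℝ) :
    gaussianPDFReal v t x = gaussianPDFReal 0 t x * auxE σ v x := by
  have hne : σ^2 ≠ 0 := by positivity
  simp only [gaussianPDFReal, auxE, htc]
  exact exp_h1 _ _ _ _ (by field_simp; ring)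

lemma pdf_factor2 (hσ : 0 < σ) (htc : (t : ℝ) = σ^2) (u v x : ℝ) :
    gaussianPDFReal 0 t x * (auxE σ u x * auxE σ v x)
      = Real.exp (u*v/σ^2) * gaussianPDFReal (u+v) t x := by
  have hne : σ^2 ≠ 0 := by positivity
  simp only [gaussianPDFReal, auxE, htc]
  exact exp_h2' _ _ _ _ _ _ (by field_simp; ring)

lemma gaussianPDF_factor (hσ : 0 < σ) (htc : (t : ℝ) = σ^2) (v x : ℝ) :
    gaussianPDF v t x = gaussianPDF 0 t x * auxA σ v x := by
  simp only [gaussianPDF, auxA]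
  rw [pdf_factor hσ htc v x, ENNReal.ofReal_mul (gaussianPDFReal_nonneg _ _ _)]

lemma hae_abs (hsupp : π₁ (Set.Icc (-δ) δ) = 1) : ∀ᵐ v ∂π₁, |v| ≤ δ := by
  have h : π₁ (Set.Icc (-δ) δ)ᶜ = 0 := by
    rw [measure_compl measurableSet_Icc (measure_ne_top _ _), hsupp, measure_univ, tsub_self]
  have h2 : ∀ᵐ v ∂π₁, v ∈ Set.Icc (-δ) δ := by
    rw [ae_iff]
    simpa [Set.compl_def] using h
  exact h2.mono fun v hv => abs_le.mpr ⟨hv.1, hv.2⟩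

lemma auxF_lt_top (hσ : 0 < σ) (hsupp : π₁ (Set.Icc (-δ) δ) = 1) (x : ℝ) :
    auxF σ π₁ x < ⊤ := by
  have hae := hae_abs hsupp
  have hb : ∀ᵐ v ∂π₁, auxA σ v x ≤ ENNReal.ofReal (Real.exp (δ*|x|/σ^2)) := by
    refine hae.mono fun v hv => ?_
    apply ENNReal.ofReal_le_ofReal
    apply Real.exp_le_exp.mpr
    have h1 : v*x ≤ δ*|x| := by
      calc v*x ≤ |v * x| := le_abs_self _
        _ = |v| * |x| := abs_mul _ _
        _ ≤ δ*|x| := mul_le_mul_of_nonneg_right hv (abs_nonneg _)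
    have hσ2 : (0:ℝ) < 2*σ^2 := by positivity
    rw [div_le_div_iff₀ hσ2 (by positivity)]
    nlinarith [mul_le_mul_of_nonneg_left h1 hσ2.le, mul_nonneg (sq_nonneg σ) (sq_nonneg v)]
  calc auxF σ π₁ x ≤ ∫⁻ _, ENNReal.ofReal (Real.exp (δ*|x|/σ^2)) ∂π₁ := lintegral_mono_ae hb
    _ = ENNReal.ofReal (Real.exp (δ*|x|/σ^2)) := by rw [lintegral_const, measure_univ, mul_one]
    _ < ⊤ := ENNReal.ofReal_lt_top

lemma auxL_le (hσ : 0 < σ) (hδ : 0 ≤ δ)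
    (hsupp : π₁ (Set.Icc (-δ) δ) = 1)
    (hsymm : π₁.map (fun x => -x) = π₁) :
    auxL σ π₁ ≤ ENNReal.ofReal (Real.cosh (δ^2/σ^2)) := by
  have hae := hae_abs hsupp
  have inner : ∀ u : ℝ, |u| ≤ δ →
      ∫⁻ v, ENNReal.ofReal (Real.exp (u*v/σ^2)) ∂π₁ ≤ ENNReal.ofReal (Real.cosh (δ^2/σ^2)) := by
    intro u hu
    set I := ∫⁻ v, ENNReal.ofReal (Real.exp (u*v/σ^2)) ∂π₁ with hI_def
    have hsym : I = ∫⁻ v, ENNReal.ofReal (Real.exp (-(u*v/σ^2))) ∂π₁ := by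
      rw [hI_def]
      conv_lhs => rw [← hsymm]
      rw [lintegral_map (expA_meas1 σ u) measurable_neg]
      exact lintegral_congr fun v => by rw [mul_neg, neg_div]
    have h2I : 2 * I = ∫⁻ v, ENNReal.ofReal (2 * Real.cosh (u*v/σ^2)) ∂π₁ := by
      have h : 2 * I = I + I := by ring
      rw [h]
      nth_rewrite 2 [hsym]
      rw [← lintegral_add_left (expA_meas1 σ u)]
      refine lintegral_congr fun v => ?_
      rw [← ENNReal.ofReal_add (Real.exp_pos _).le (Real.exp_pos _).le, Real.cosh_eq]
      congr 1
      ring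
    have hbound : 2 * I ≤ 2 * ENNReal.ofReal (Real.cosh (δ^2/σ^2)) := by
      rw [h2I]
      calc ∫⁻ v, ENNReal.ofReal (2 * Real.cosh (u*v/σ^2)) ∂π₁
          ≤ ∫⁻ _, ENNReal.ofReal (2 * Real.cosh (δ^2/σ^2)) ∂π₁ := by
            refine lintegral_mono_ae (hae.mono fun v hv => ?_)
            apply ENNReal.ofReal_le_ofReal
            have hc : Real.cosh (u*v/σ^2) ≤ Real.cosh (δ^2/σ^2) := by
              apply Real.cosh_le_cosh.mpr
              rw [abs_div, abs_div]
              apply div_le_div_of_nonneg_right ?_ ?_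
              · rw [abs_mul, abs_of_nonneg (sq_nonneg δ), sq]
                exact mul_le_mul hu hv (abs_nonneg _) hδ
              · positivity
            linarith
        _ = ENNReal.ofReal (2 * Real.cosh (δ^2/σ^2)) := by
            rw [lintegral_const, measure_univ, mul_one]
        _ = 2 * ENNReal.ofReal (Real.cosh (δ^2/σ^2)) := by
            rw [ENNReal.ofReal_mul (by norm_num), ENNReal.ofReal_ofNat]
    exact (ENNReal.mul_le_mul_iff_right (by norm_num) (by norm_num)).mp hbound
  calc auxL σ π₁ ≤ ∫⁻ _, ENNReal.ofReal (Real.cosh (δ^2/σ^2)) ∂π₁ :=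
        lintegral_mono_ae (hae.mono fun u hu => inner u hu)
    _ = ENNReal.ofReal (Real.cosh (δ^2/σ^2)) := by rw [lintegral_const, measure_univ, mul_one]

lemma lintegral_auxF (hσ : 0 < σ) (htc : (t : ℝ) = σ^2) :
    ∫⁻ x, auxF σ π₁ x ∂(gaussianReal 0 t) = 1 := by
  have ht0 := t_ne_zero hσ htc
  rw [gaussianReal_of_var_ne_zero 0 ht0,
    lintegral_withDensity_eq_lintegral_mul volume (measurable_gaussianPDF 0 t) (auxF_meas σ π₁)]
  have key : ∀ x, (gaussianPDF 0 t * auxF σ π₁) x = ∫⁻ v, gaussianPDF v t x ∂π₁ := by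
    intro x
    simp only [Pi.mul_apply, auxF]
    rw [← lintegral_const_mul _ (auxA_meas1 σ x)]
    exact lintegral_congr fun v => (gaussianPDF_factor hσ htc v x).symm
  rw [lintegral_congr key,
    lintegral_lintegral_swap (f := fun x v => gaussianPDF v t x) (pdf_prod_meas' t).aemeasurable]
  rw [lintegral_congr fun v => lintegral_gaussianPDF_eq_one v ht0, lintegral_one, measure_univ]

lemma lintegral_auxF_sq (hσ : 0 < σ) (htc : (t : ℝ) = σ^2) :
    ∫⁻ x, (auxF σ π₁ x)^2 ∂(gaussianReal 0 t) = auxL σ π₁ := by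
  have ht0 := t_ne_zero hσ htc
  have hW_meas : Measurable (fun q : ℝ × (ℝ × ℝ) =>
      gaussianPDF 0 t q.1 * (auxA σ q.2.1 q.1 * auxA σ q.2.2 q.1)) := by
    refine Measurable.mul ((measurable_gaussianPDF 0 t).comp measurable_fst)
      (Measurable.mul (f := fun q : ℝ × (ℝ × ℝ) => auxA σ q.2.1 q.1)
        (g := fun q : ℝ × (ℝ × ℝ) => auxA σ q.2.2 q.1) ?_ ?_)
    · apply Measurable.ennreal_ofReal
      apply Continuous.measurable
      exact (Continuous.div_const (by fun_prop) _).rexp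
    · apply Measurable.ennreal_ofReal
      apply Continuous.measurable
      exact (Continuous.div_const (by fun_prop) _).rexp
  have hWx_meas : ∀ x : ℝ, Measurable (fun w : ℝ × ℝ =>
      gaussianPDF 0 t x * (auxA σ w.1 x * auxA σ w.2 x)) := by
    intro x
    refine Measurable.const_mul (Measurable.mul (f := fun w : ℝ × ℝ => auxA σ w.1 x)
      (g := fun w : ℝ × ℝ => auxA σ w.2 x) ?_ ?_) _
    · apply Measurable.ennreal_ofReal
      apply Continuous.measurable
      exact (Continuous.div_const (by fun_prop) _).rexp
    · apply Measurable.ennreal_ofReal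
      apply Continuous.measurable
      exact (Continuous.div_const (by fun_prop) _).rexp
  rw [gaussianReal_of_var_ne_zero 0 ht0,
    lintegral_withDensity_eq_lintegral_mul volume (measurable_gaussianPDF 0 t)
      ((auxF_meas σ π₁).pow_const 2)]
  have key : ∀ x, (gaussianPDF 0 t * fun x => (auxF σ π₁ x)^2) x
      = ∫⁻ w : ℝ × ℝ, gaussianPDF 0 t x * (auxA σ w.1 x * auxA σ w.2 x) ∂(π₁.prod π₁) := by
    intro x
    rw [lintegral_prod _ (hWx_meas x).aemeasurable]
    simp only [Pi.mul_apply]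
    calc gaussianPDF 0 t x * (auxF σ π₁ x)^2
        = (gaussianPDF 0 t x * auxF σ π₁ x) * auxF σ π₁ x := by rw [sq]; ring
      _ = (∫⁻ u, gaussianPDF 0 t x * auxA σ u x ∂π₁) * auxF σ π₁ x := by
          rw [lintegral_const_mul _ (auxA_meas1 σ x), auxF]
      _ = ∫⁻ u, (gaussianPDF 0 t x * auxA σ u x) * auxF σ π₁ x ∂π₁ := by
          rw [lintegral_mul_const _ (Measurable.const_mul (auxA_meas1 σ x) _)]
      _ = ∫⁻ u, ∫⁻ v, gaussianPDF 0 t x * (auxA σ u x * auxA σ v x) ∂π₁ ∂π₁ := by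
          refine lintegral_congr fun u => ?_
          rw [auxF, ← lintegral_const_mul _ (auxA_meas1 σ x)]
          exact lintegral_congr fun v => by ring
  rw [lintegral_congr key]
  rw [lintegral_lintegral_swap (f := fun x (w : ℝ × ℝ) =>
    gaussianPDF 0 t x * (auxA σ w.1 x * auxA σ w.2 x)) hW_meas.aemeasurable]
  have inner : ∀ w : ℝ × ℝ, ∫⁻ x, gaussianPDF 0 t x * (auxA σ w.1 x * auxA σ w.2 x) ∂volume
      = ENNReal.ofReal (Real.exp (w.1*w.2/σ^2)) := by
    rintro ⟨u, v⟩
    have hpt : ∀ x, gaussianPDF 0 t x * (auxA σ u x * auxA σ v x)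
        = ENNReal.ofReal (Real.exp (u*v/σ^2)) * gaussianPDF (u+v) t x := by
      intro x
      simp only [gaussianPDF, auxA]
      rw [← ENNReal.ofReal_mul (auxE_nonneg σ u x),
        ← ENNReal.ofReal_mul (gaussianPDFReal_nonneg _ _ _), pdf_factor2 hσ htc u v x,
        ENNReal.ofReal_mul (Real.exp_pos _).le]
    rw [lintegral_congr hpt, lintegral_const_mul _ (measurable_gaussianPDF _ t),
      lintegral_gaussianPDF_eq_one _ ht0, mul_one]
  rw [lintegral_congr inner, auxL, lintegral_prod _ ((expA_meas σ).aemeasurable)]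

lemma bind_eq_withDensity (hσ : 0 < σ) (htc : (t : ℝ) = σ^2) :
    π₁.bind (fun v => gaussianReal v t)
      = volume.withDensity (fun x => ∫⁻ v, gaussianPDF v t x ∂π₁) := by
  have ht0 := t_ne_zero hσ htc
  have hker : Measurable (fun v => gaussianReal v t) := by
    apply Measure.measurable_of_measurable_coe
    intro s hs
    simp_rw [gaussianReal_apply _ ht0 s]
    exact Measurable.lintegral_prod_right (f := fun v x => gaussianPDF v t x) (pdf_prod_meas t)
  ext s hs
  rw [Measure.bind_apply hs hker.aemeasurable, withDensity_apply _ hs]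
  simp_rw [gaussianReal_apply _ ht0 s]
  rw [lintegral_lintegral_swap (pdf_prod_meas t).aemeasurable]

lemma rnDeriv_eq_auxF (hσ : 0 < σ) (htc : (t : ℝ) = σ^2) :
    (π₁.bind (fun v => gaussianReal v t)).rnDeriv (gaussianReal 0 t)
      =ᵐ[gaussianReal 0 t] auxF σ π₁ := by
  have ht0 := t_ne_zero hσ htc
  have hg_meas : Measurable (fun x => ∫⁻ v, gaussianPDF v t x ∂π₁) :=
    Measurable.lintegral_prod_right (f := fun x v => gaussianPDF v t x) (pdf_prod_meas' t)
  have hp0 : ∀ x, gaussianPDF 0 t x ≠ 0 := fun x => (gaussianPDF_pos _ ht0 x).ne'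
  have hptop : ∀ x, gaussianPDF 0 t x ≠ ⊤ := fun x => ENNReal.ofReal_ne_top
  have hgF : ∀ x, (∫⁻ v, gaussianPDF v t x ∂π₁) = gaussianPDF 0 t x * auxF σ π₁ x := by
    intro x
    rw [auxF, ← lintegral_const_mul _ (auxA_meas1 σ x)]
    exact lintegral_congr fun v => gaussianPDF_factor hσ htc v x
  have hdiv : ∀ x, (∫⁻ v, gaussianPDF v t x ∂π₁) / gaussianPDF 0 t x = auxF σ π₁ x := by
    intro x
    rw [hgF x, mul_comm, mul_div_assoc, ENNReal.div_self (hp0 x) (hptop x), mul_one]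
  have hQ : π₁.bind (fun v => gaussianReal v t)
      = (gaussianReal 0 t).withDensity
          (fun x => (∫⁻ v, gaussianPDF v t x ∂π₁) / gaussianPDF 0 t x) := by
    rw [bind_eq_withDensity hσ htc, gaussianReal_of_var_ne_zero 0 ht0,
      ← withDensity_mul volume (measurable_gaussianPDF 0 t) (by exact hg_meas.div (measurable_gaussianPDF 0 t) :
        Measurable fun x => (∫⁻ v, gaussianPDF v t x ∂π₁) / gaussianPDF 0 t x)]
    congr 1
    ext x
    simp only [Pi.mul_apply, Pi.div_apply]
    rw [ENNReal.mul_div_cancel (hp0 x) (hptop x)]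
  rw [hQ]
  refine (Measure.rnDeriv_withDensity _ (hg_meas.div (measurable_gaussianPDF 0 t))).trans ?_
  exact Filter.EventuallyEq.of_eq (funext hdiv)

end Main

/-- The chi-squared divergence `χ²(Q, P) = ∫ (dQ/dP - 1)² dP`. -/
noncomputable def chiSq {α : Type*} [MeasurableSpace α] (Q P : Measure α) : ℝ :=
  ∫ x, ((Q.rnDeriv P x).toReal - 1) ^ 2 ∂P

section Main2
variable {σ δ : ℝ} {π₁ : Measure ℝ} [IsProbabilityMeasure π₁]

lemma chi_eq {P Q : Measure ℝ} [IsProbabilityMeasure P] (σ : ℝ) (π₁ : Measure ℝ)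
    [IsProbabilityMeasure π₁]
    (hrn : Q.rnDeriv P =ᵐ[P] auxF σ π₁)
    (hFlt : ∀ x, auxF σ π₁ x < ⊤)
    (hI1 : ∫⁻ x, auxF σ π₁ x ∂P = 1)
    (hI2 : ∫⁻ x, (auxF σ π₁ x)^2 ∂P = auxL σ π₁) :
    chiSq Q P = ((auxL σ π₁ + 1) - 2).toReal := by
  have hFm := auxF_meas σ π₁
  unfold chiSq
  have h1 : (fun x => ((Q.rnDeriv P x).toReal - 1) ^ 2)
      =ᵐ[P] fun x => ((auxF σ π₁ x).toReal - 1) ^ 2 :=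
    hrn.mono fun x hx => by simp only [hx]
  rw [integral_congr_ae h1,
    integral_eq_lintegral_of_nonneg_ae (ae_of_all _ fun x => sq_nonneg _)
      (by exact ((hFm.ennreal_toReal.sub measurable_const).pow_const 2).aestronglyMeasurable :
        AEStronglyMeasurable (fun x => ((auxF σ π₁ x).toReal - 1) ^ 2) P)]
  congr 1
  have point : ∀ x, ENNReal.ofReal (((auxF σ π₁ x).toReal - 1)^2)
      = ((auxF σ π₁ x)^2 + 1) - 2 * auxF σ π₁ x := by
    intro x
    set a := (auxF σ π₁ x).toReal with ha_def
    have ha : 0 ≤ a := ENNReal.toReal_nonneg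
    have hFx : auxF σ π₁ x = ENNReal.ofReal a := (ENNReal.ofReal_toReal (hFlt x).ne).symm
    rw [hFx]
    have h2 : (a - 1)^2 = (a^2 + 1) - 2*a := by ring
    rw [h2, ENNReal.ofReal_sub _ (by positivity), ENNReal.ofReal_add (by positivity) zero_le_one,
      ENNReal.ofReal_pow ha, ENNReal.ofReal_one, ENNReal.ofReal_mul (by norm_num),
      ENNReal.ofReal_ofNat]
  rw [lintegral_congr point]
  have hsub_le : (fun x => 2 * auxF σ π₁ x) ≤ᵐ[P] fun x => (auxF σ π₁ x)^2 + 1 := by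
    refine ae_of_all _ fun x => ?_
    set a := (auxF σ π₁ x).toReal with ha_def
    have ha : 0 ≤ a := ENNReal.toReal_nonneg
    have hFx : auxF σ π₁ x = ENNReal.ofReal a := (ENNReal.ofReal_toReal (hFlt x).ne).symm
    show 2 * auxF σ π₁ x ≤ (auxF σ π₁ x)^2 + 1
    rw [hFx, ← ENNReal.ofReal_ofNat, ← ENNReal.ofReal_mul (by norm_num),
      ← ENNReal.ofReal_pow ha, ← ENNReal.ofReal_one,
      ← ENNReal.ofReal_add (by positivity) zero_le_one]
    have hq : 2*a ≤ a^2+1 := by nlinarith [sq_nonneg (a-1), sq_abs a]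
    exact ENNReal.ofReal_le_ofReal hq
  have hsub_fin : ∫⁻ x, 2 * auxF σ π₁ x ∂P ≠ ⊤ := by
    rw [lintegral_const_mul _ hFm, hI1, mul_one]
    norm_num
  rw [lintegral_sub (hFm.const_mul 2) hsub_fin hsub_le,
    lintegral_add_right _ measurable_const, hI2, lintegral_const, measure_univ, mul_one,
    lintegral_const_mul _ hFm, hI1, mul_one]

end Main2

theorem chisq_simple_null_bound (δ σ : ℝ) (hδ : 0 ≤ δ) (hσ : 0 < σ)
    (π₁ : Measure ℝ) [IsProbabilityMeasure π₁]
    (hsupp : π₁ (Set.Icc (-δ) δ) = 1)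
    (hsymm : π₁.map (fun x => -x) = π₁) :
    chiSq (π₁.bind fun v => gaussianReal v (Real.toNNReal (σ ^ 2)))
        (gaussianReal 0 (Real.toNNReal (σ ^ 2)))
      ≤ Real.cosh (δ ^ 2 / σ ^ 2) - 1 ∧
    Real.cosh (δ ^ 2 / σ ^ 2) - 1 ≤ Real.exp ((δ / σ) ^ 4 / 2) - 1 := by
  constructor
  · have htc : ((Real.toNNReal (σ ^ 2) : NNReal) : ℝ) = σ^2 :=
      Real.coe_toNNReal _ (sq_nonneg σ)
    have hchi := chi_eq σ π₁ (rnDeriv_eq_auxF hσ htc) (auxF_lt_top hσ hsupp)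
      (lintegral_auxF hσ htc) (lintegral_auxF_sq hσ htc)
    rw [hchi]
    have hL := auxL_le hσ hδ hsupp hsymm
    have hcosh1 : (1:ℝ) ≤ Real.cosh (δ^2/σ^2) := Real.one_le_cosh _
    have hle : (auxL σ π₁ + 1) - 2 ≤ ENNReal.ofReal (Real.cosh (δ^2/σ^2) - 1) := by
      rw [tsub_le_iff_right]
      have hh : ENNReal.ofReal (Real.cosh (δ^2/σ^2))
          = ENNReal.ofReal (Real.cosh (δ^2/σ^2) - 1) + 1 := by
        rw [← ENNReal.ofReal_one, ← ENNReal.ofReal_add (by linarith) zero_le_one]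
        norm_num
      calc auxL σ π₁ + 1 ≤ ENNReal.ofReal (Real.cosh (δ^2/σ^2)) + 1 := add_le_add_left hL 1
        _ = ENNReal.ofReal (Real.cosh (δ^2/σ^2) - 1) + 1 + 1 := by rw [hh]
        _ = ENNReal.ofReal (Real.cosh (δ^2/σ^2) - 1) + 2 := by ring
    calc ((auxL σ π₁ + 1) - 2).toReal
        ≤ (ENNReal.ofReal (Real.cosh (δ^2/σ^2) - 1)).toReal :=
          ENNReal.toReal_mono ENNReal.ofReal_ne_top hle
      _ = Real.cosh (δ^2/σ^2) - 1 := ENNReal.toReal_ofReal (by linarith)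
  · have h := Real.cosh_le_exp_half_sq (δ^2/σ^2)
    have heq : (δ^2/σ^2)^2/2 = (δ/σ)^4/2 := by
      rw [div_pow, div_pow, ← pow_mul, ← pow_mul]
    rw [heq] at h
    linarith
end

section
/- Suppose for a statistical model {P_v : v ∈ ℝ^d} there exist probability measures π₀, π₁ on ℝ^d with π₀(V₀) ≥ 1 − c/4 and π₁(V₁) ≥ 1 − c/4, where c = 1 − (α + β), and the induced mixtures satisfy TV(P_{π₀}, P_{π₁}) < c/2. Then every test ψ with sup_{v∈V₀} P_v(ψ = 1) ≤ α satisfies sup_{v∈V₁} P_v(ψ = 0) > β. -/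
open MeasureTheory

/-- The total variation distance between two measures. -/
noncomputable def tvDist {Ω : Type*} [MeasurableSpace Ω] (Q₀ Q₁ : Measure Ω) : ℝ :=
  ⨆ B : {s : Set Ω // MeasurableSet s}, |(Q₀ B).toReal - (Q₁ B).toReal|

theorem fuzzy_hypotheses_lower_bound {Ω : Type*} [MeasurableSpace Ω] (d : ℕ)
    (P : (Fin d → ℝ) → Measure Ω) (hP : Measurable P)
    (hPprob : ∀ v, IsProbabilityMeasure (P v))
    (V₀ V₁ : Set (Fin d → ℝ))
    (π₀ π₁ : Measure (Fin d → ℝ)) [IsProbabilityMeasure π₀] [IsProbabilityMeasure π₁]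
    (α β : ℝ) (hα : 0 < α) (hβ : 0 < β) (hαβ : α + β < 1)
    (h0 : ENNReal.ofReal (1 - (1 - (α + β)) / 4) ≤ π₀ V₀)
    (h1 : ENNReal.ofReal (1 - (1 - (α + β)) / 4) ≤ π₁ V₁)
    (htv : tvDist (π₀.bind P) (π₁.bind P) < (1 - (α + β)) / 2)
    (R : Set Ω) (hR : MeasurableSet R)
    (hvalid : ∀ v ∈ V₀, P v R ≤ ENNReal.ofReal α) :
    ENNReal.ofReal β < ⨆ v ∈ V₁, P v Rᶜ := by
  by_contra hcon
  push_neg at hcon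
  set c : ℝ := 1 - (α + β) with hc_def
  have hc : 0 < c := by simp only [hc_def]; linarith
  have hβ1 : β < 1 := by linarith
  have hα1 : α < 1 := by linarith
  have hc1 : c / 4 < 1 := by simp only [hc_def]; linarith
  have hfR : Measurable fun v => P v R := (Measure.measurable_coe hR).comp hP
  have hfRc : Measurable fun v => P v Rᶜ := (Measure.measurable_coe hR.compl).comp hP
  have hcon' : ∀ v ∈ V₁, P v Rᶜ ≤ ENNReal.ofReal β := fun v hv =>
    le_trans (le_iSup₂ (f := fun v (_ : v ∈ V₁) => P v Rᶜ) v hv) hcon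
  have hsum : ENNReal.ofReal (c / 4) + ENNReal.ofReal (1 - c / 4) = 1 := by
    rw [← ENNReal.ofReal_add (by linarith) (by linarith)]
    norm_num
  -- upper bound on (π₀.bind P) R
  set A : Set (Fin d → ℝ) := {v | ENNReal.ofReal α < P v R} with hA_def
  have hA : MeasurableSet A := measurableSet_lt measurable_const hfR
  have hV₀Ac : V₀ ⊆ Aᶜ := fun v hv hvA => absurd (hvalid v hv) (not_le.mpr hvA)
  have hAc : ENNReal.ofReal (1 - c / 4) ≤ π₀ Aᶜ := le_trans h0 (measure_mono hV₀Ac)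
  have hAsmall : π₀ A ≤ ENNReal.ofReal (c / 4) := by
    have key : π₀ A + π₀ Aᶜ = 1 := (measure_add_measure_compl hA).trans measure_univ
    have h2 : π₀ A + ENNReal.ofReal (1 - c / 4) ≤
        ENNReal.ofReal (c / 4) + ENNReal.ofReal (1 - c / 4) := by
      rw [hsum]
      calc π₀ A + ENNReal.ofReal (1 - c / 4) ≤ π₀ A + π₀ Aᶜ := add_le_add_right hAc _
        _ = 1 := key
    exact (ENNReal.add_le_add_iff_right ENNReal.ofReal_ne_top).mp h2
  have hQ0 : (π₀.bind P) R ≤ ENNReal.ofReal (α + c / 4) := by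
    rw [Measure.bind_apply hR hP.aemeasurable]
    have hsplit : ∫⁻ v, P v R ∂π₀
        = ∫⁻ v in A, P v R ∂π₀ + ∫⁻ v in Aᶜ, P v R ∂π₀ := (lintegral_add_compl _ hA).symm
    have hIA : ∫⁻ v in A, P v R ∂π₀ ≤ π₀ A := by
      calc ∫⁻ v in A, P v R ∂π₀ ≤ ∫⁻ _ in A, 1 ∂π₀ := by
            refine setLIntegral_mono measurable_const fun v _ => ?_
            haveI := hPprob v; exact prob_le_one
        _ = π₀ A := setLIntegral_one _
    have hIAc : ∫⁻ v in Aᶜ, P v R ∂π₀ ≤ ENNReal.ofReal α := by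
      calc ∫⁻ v in Aᶜ, P v R ∂π₀ ≤ ∫⁻ _ in Aᶜ, ENNReal.ofReal α ∂π₀ :=
            setLIntegral_mono measurable_const fun v hv => not_lt.mp hv
        _ = ENNReal.ofReal α * π₀ Aᶜ := setLIntegral_const _ _
        _ ≤ ENNReal.ofReal α * 1 := mul_le_mul_right prob_le_one _
        _ = ENNReal.ofReal α := mul_one _
    calc ∫⁻ v, P v R ∂π₀ = _ := hsplit
      _ ≤ ENNReal.ofReal (c / 4) + ENNReal.ofReal α := add_le_add (hIA.trans hAsmall) hIAc
      _ = ENNReal.ofReal (α + c / 4) := by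
          rw [← ENNReal.ofReal_add (by linarith) (by linarith)]; ring_nf
  -- lower bound on (π₁.bind P) R
  set B : Set (Fin d → ℝ) := {v | ENNReal.ofReal β < P v Rᶜ} with hB_def
  have hB : MeasurableSet B := measurableSet_lt measurable_const hfRc
  have hV₁Bc : V₁ ⊆ Bᶜ := fun v hv hvB => absurd (hcon' v hv) (not_le.mpr hvB)
  have hBc : ENNReal.ofReal (1 - c / 4) ≤ π₁ Bᶜ := le_trans h1 (measure_mono hV₁Bc)
  have hlow : ∀ v ∈ Bᶜ, ENNReal.ofReal (1 - β) ≤ P v R := by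
    intro v hv
    haveI := hPprob v
    have hb : P v Rᶜ ≤ ENNReal.ofReal β := not_lt.mp hv
    have hadd : P v R + P v Rᶜ = 1 := (measure_add_measure_compl hR).trans measure_univ
    have hsb : ENNReal.ofReal (1 - β) + ENNReal.ofReal β = 1 := by
      rw [← ENNReal.ofReal_add (by linarith) (by linarith)]; norm_num
    have h2 : ENNReal.ofReal (1 - β) + P v Rᶜ ≤ P v R + P v Rᶜ := by
      calc ENNReal.ofReal (1 - β) + P v Rᶜ ≤ ENNReal.ofReal (1 - β) + ENNReal.ofReal β :=
            add_le_add_right hb _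
        _ = 1 := hsb
        _ = P v R + P v Rᶜ := hadd.symm
    exact (ENNReal.add_le_add_iff_right (measure_ne_top _ _)).mp h2
  have hQ1 : ENNReal.ofReal (1 - β - c / 4) ≤ (π₁.bind P) R := by
    rw [Measure.bind_apply hR hP.aemeasurable]
    calc ENNReal.ofReal (1 - β - c / 4)
        ≤ ENNReal.ofReal ((1 - β) * (1 - c / 4)) := by
          apply ENNReal.ofReal_le_ofReal; nlinarith
      _ = ENNReal.ofReal (1 - β) * ENNReal.ofReal (1 - c / 4) :=
          ENNReal.ofReal_mul (by linarith)
      _ ≤ ENNReal.ofReal (1 - β) * π₁ Bᶜ := mul_le_mul_right hBc _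
      _ = ∫⁻ _ in Bᶜ, ENNReal.ofReal (1 - β) ∂π₁ := (setLIntegral_const _ _).symm
      _ ≤ ∫⁻ v in Bᶜ, P v R ∂π₁ := setLIntegral_mono hfR hlow
      _ ≤ ∫⁻ v, P v R ∂π₁ := lintegral_mono' Measure.restrict_le_self le_rfl
  -- both bind measures are probability measures
  have hprob : ∀ π : Measure (Fin d → ℝ), IsProbabilityMeasure π →
      IsProbabilityMeasure (π.bind P) := by
    intro π hπ
    constructor
    rw [Measure.bind_apply MeasurableSet.univ hP.aemeasurable]
    calc ∫⁻ v, P v Set.univ ∂π = ∫⁻ _, 1 ∂π :=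
          lintegral_congr fun v => (hPprob v).measure_univ
      _ = 1 := by haveI := hπ; simp
  haveI hp0 : IsProbabilityMeasure (π₀.bind P) := hprob π₀ inferInstance
  haveI hp1 : IsProbabilityMeasure (π₁.bind P) := hprob π₁ inferInstance
  -- TV lower bound
  have hbdd : BddAbove (Set.range fun B : {s : Set Ω // MeasurableSet s} =>
      |((π₀.bind P) B).toReal - ((π₁.bind P) B).toReal|) := by
    refine ⟨1, ?_⟩
    rintro x ⟨S, rfl⟩
    have h0' : ((π₀.bind P) S).toReal ≤ 1 := by
      have := prob_le_one (μ := π₀.bind P) (s := S)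
      simpa using ENNReal.toReal_mono ENNReal.one_ne_top this
    have h1' : ((π₁.bind P) S).toReal ≤ 1 := by
      have := prob_le_one (μ := π₁.bind P) (s := S)
      simpa using ENNReal.toReal_mono ENNReal.one_ne_top this
    have h0n : 0 ≤ ((π₀.bind P) S).toReal := ENNReal.toReal_nonneg
    have h1n : 0 ≤ ((π₁.bind P) S).toReal := ENNReal.toReal_nonneg
    rw [abs_le]; constructor <;> linarith
  have htv' : |((π₀.bind P) R).toReal - ((π₁.bind P) R).toReal|
      ≤ tvDist (π₀.bind P) (π₁.bind P) :=
    le_ciSup hbdd (⟨R, hR⟩ : {s : Set Ω // MeasurableSet s})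
  have ht0 : ((π₀.bind P) R).toReal ≤ α + c / 4 :=
    ENNReal.toReal_le_of_le_ofReal (by linarith) hQ0
  have ht1 : 1 - β - c / 4 ≤ ((π₁.bind P) R).toReal :=
    (ENNReal.ofReal_le_iff_le_toReal (measure_ne_top _ _)).mp hQ1
  have habs : ((π₁.bind P) R).toReal - ((π₀.bind P) R).toReal
      ≤ |((π₀.bind P) R).toReal - ((π₁.bind P) R).toReal| := by
    rw [abs_sub_comm]; exact le_abs_self _
  linarith
end
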